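/- Corollary 2: For every AMP CG G over V there exists a DAG G'' over V ∪ ε ∪ S with deterministic nodes, such that for all disjoint X, Y, Z ⊆ V: X ⊥_G Y | Z in the AMP interpretation of G if and only if X ⊥_{G''} Y | Z ∪ S in G'' (d-separation with deterministic nodes). That is, I_{AMP}(G) = [I(G'')]_ε^S. -/

import Mathlib

/- Mixed graphs with directed and undirected edges. -/
structure MixedGraph (γ : Type*) where
  dir : γ → γ → Prop
  undir : γ → γ → Prop
  undir_symm : ∀ a b, undir a b → undir b a

namespace MixedGraph

variable {β : Type*} (G : MixedGraph β)

/-- Two nodes are adjacent if joined by some edge. -/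
def adj (a b : β) : Prop := G.dir a b ∨ G.dir b a ∨ G.undir a b

/-- The graph is simple: no loops and at most one edge between any pair. -/
def Simple : Prop :=
  (∀ a, ¬ G.dir a a) ∧ (∀ a, ¬ G.undir a a) ∧
  (∀ a b, G.dir a b → ¬ G.dir b a) ∧ (∀ a b, G.dir a b → ¬ G.undir a b)

/-- A semidirected cycle: a cycle whose first edge is directed and whose other
edges are directed or undirected (all pointing forwards). -/
def HasSemidirectedCycle : Prop :=
  ∃ (n : ℕ) (f : Fin (n + 2) → β),
    f 0 = f (Fin.last (n + 1)) ∧ G.dir (f 0) (f 1) ∧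
    ∀ i : Fin (n + 1), G.dir (f i.castSucc) (f i.succ) ∨ G.undir (f i.castSucc) (f i.succ)

/-- A chain graph: a simple graph with no semidirected cycle. -/
def IsChainGraph : Prop := G.Simple ∧ ¬ G.HasSemidirectedCycle

/-- A DAG: a chain graph with no undirected edges. -/
def IsDAG : Prop := G.IsChainGraph ∧ ∀ a b, ¬ G.undir a b

/-- Parents of a set of nodes. -/
def pa (X : Set β) : Set β := {v | v ∉ X ∧ ∃ x ∈ X, G.dir v x}

/-- Strict ascendants of a set of nodes (strictly descending route to the set). -/
def san (W : Set β) : Set β := {v | v ∉ W ∧ ∃ w ∈ W, Relation.TransGen G.dir v w}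

/-- B is a triplex node between A and C: A → B ← C, A → B − C, or A − B ← C. -/
def triplex (A B C : β) : Prop :=
  (G.dir A B ∧ G.dir C B) ∨ (G.dir A B ∧ G.undir B C) ∨ (G.undir A B ∧ G.dir C B)

/-- B is a non-triplex node between A and C. -/
def nontriplex (A B C : β) : Prop :=
  G.adj A B ∧ G.adj B C ∧ ¬ G.triplex A B C

/-- A route: a nonempty sequence of consecutively adjacent nodes. -/
def IsRoute (l : List β) : Prop := l ≠ [] ∧ l.Chain' G.adj

/-- A path that is open given the determined set `D` (AMP path-based semantics). -/
def AMPOpenPath (D : Set β) (l : List β) : Prop :=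
  G.IsRoute l ∧ l.Nodup ∧
  (∀ A B C, [A, B, C] <:+: l → G.triplex A B C → B ∈ D ∪ G.san D) ∧
  (∀ A B C, [A, B, C] <:+: l → G.nontriplex A B C → B ∈ D →
    (G.undir A B ∧ G.undir B C ∧ ∃ p ∈ G.pa {B}, p ∉ D))

/-- A route that is open given the determined set `D` (AMP route-based semantics). -/
def AMPOpenRoute (D : Set β) (l : List β) : Prop :=
  G.IsRoute l ∧
  (∀ A B C, [A, B, C] <:+: l → G.triplex A B C → B ∈ D) ∧
  (∀ A B C, [A, B, C] <:+: l → G.nontriplex A B C → B ∉ D)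

/-- AMP separation (path-based) of X and Y given determined set D. -/
def AMPSep (D X Y : Set β) : Prop :=
  ∀ (l : List β) (x y : β), x ∈ X → y ∈ Y → l.head? = some x → l.getLast? = some y →
    ¬ G.AMPOpenPath D l

/-- AMP separation (route-based) of X and Y given determined set D. -/
def AMPSepRoute (D X Y : Set β) : Prop :=
  ∀ (l : List β) (x y : β), x ∈ X → y ∈ Y → l.head? = some x → l.getLast? = some y →
    ¬ G.AMPOpenRoute D l

/-- `s` is a collider section of the route `l`: a maximal undirected subroute of `l`
entered by arrowheads at both ends. -/
def IsColliderSection (l s : List β) : Prop :=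
  s ≠ [] ∧ List.Chain' G.undir s ∧
  ∃ pre post A C, l = pre ++ s ++ post ∧
    pre.getLast? = some A ∧ post.head? = some C ∧
    (∀ b, s.head? = some b → G.dir A b) ∧ (∀ b, s.getLast? = some b → G.dir C b) ∧
    (∀ a b, pre.getLast? = some a → s.head? = some b → ¬ G.undir a b) ∧
    (∀ a b, s.getLast? = some a → post.head? = some b → ¬ G.undir a b)

/-- `s` is a non-collider section of the route `l`: a maximal undirected subroute of `l`
not entered by arrowheads at both ends. -/
def IsNonColliderSection (l s : List β) : Prop :=
  s ≠ [] ∧ List.Chain' G.undir s ∧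
  ∃ pre post, l = pre ++ s ++ post ∧
    (∀ a b, pre.getLast? = some a → s.head? = some b → ¬ G.undir a b) ∧
    (∀ a b, s.getLast? = some a → post.head? = some b → ¬ G.undir a b) ∧
    ¬ ((∃ A, pre.getLast? = some A ∧ ∀ b, s.head? = some b → G.dir A b) ∧
       (∃ C, post.head? = some C ∧ ∀ b, s.getLast? = some b → G.dir C b))

/-- A route that is open given the determined set `D` (LWF semantics). -/
def LWFOpenRoute (D : Set β) (l : List β) : Prop :=
  G.IsRoute l ∧
  (∀ s, G.IsColliderSection l s → ∃ x ∈ s, x ∈ D) ∧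
  (∀ s, G.IsNonColliderSection l s → ∀ x ∈ s, x ∉ D)

/-- LWF separation of X and Y given determined set D. -/
def LWFSep (D X Y : Set β) : Prop :=
  ∀ (l : List β) (x y : β), x ∈ X → y ∈ Y → l.head? = some x → l.getLast? = some y →
    ¬ G.LWFOpenRoute D l

/-- Closure of Z under a set `det` of deterministic relationships: `(S, a) ∈ det`
means that `a` is a function of `S`. -/
inductive Determined (det : Set (Set β × β)) (Z : Set β) : β → Prop
  | base : ∀ a, a ∈ Z → Determined det Z a
  | step : ∀ (S : Set β) (a : β), (S, a) ∈ det → (∀ b ∈ S, Determined det Z b) →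
      Determined det Z a

/-- The set D(Z) of nodes determined by Z. -/
def DSet (det : Set (Set β × β)) (Z : Set β) : Set β := {a | Determined det Z a}

end MixedGraph

section EAMP

variable {α : Type*}

/-- Directed edges of the EAMP CG: `inl` nodes are the original nodes,
`inr` nodes are the error nodes. -/
def eampDir (G : MixedGraph α) : (α ⊕ α) → (α ⊕ α) → Prop
  | Sum.inl x, Sum.inl y => G.dir x y
  | Sum.inr x, Sum.inl y => x = y
  | _, _ => False

/-- Undirected edges of the EAMP CG: `ε^A − ε^B` for each `A − B` of G. -/
def eampUndir (G : MixedGraph α) : (α ⊕ α) → (α ⊕ α) → Prop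
  | Sum.inr x, Sum.inr y => G.undir x y
  | _, _ => False

/-- The EAMP CG G' of an AMP CG G: add `ε^A → A` for each node A and replace
each undirected edge `A − B` by `ε^A − ε^B`. -/
def eamp (G : MixedGraph α) : MixedGraph (α ⊕ α) where
  dir := eampDir G
  undir := eampUndir G
  undir_symm := by
    rintro (x | x) (y | y) h <;>
      simp only [eampUndir] at h ⊢ <;>
      first
        | exact h.elim
        | exact G.undir_symm _ _ h

/-- The parents of A in G, embedded as nodes of the EAMP CG. -/
def eampPa (G : MixedGraph α) (A : α) : Set (α ⊕ α) := {x | ∃ B, G.dir B A ∧ x = Sum.inl B}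

/-- The deterministic relationships of the EAMP CG: each A is a function of
`pa_G(A) ∪ {ε^A}`, and each `ε^A` is a function of `pa_G(A) ∪ {A}`. -/
def eampDet (G : MixedGraph α) : Set (Set (α ⊕ α) × (α ⊕ α)) :=
  {p | (∃ A, p = (eampPa G A ∪ {Sum.inr A}, Sum.inl A)) ∨
       (∃ A, p = (eampPa G A ∪ {Sum.inl A}, Sum.inr A))}

/-- Marginalize the node B out of G: add `A → C` for every pair `A → B`, `B → C`,
then delete B together with all edges it participates in. -/
def marg {β : Type*} (G : MixedGraph β) (B : β) : MixedGraph β where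
  dir a c := a ≠ B ∧ c ≠ B ∧ (G.dir a c ∨ (G.dir a B ∧ G.dir B c))
  undir a c := a ≠ B ∧ c ≠ B ∧ G.undir a c
  undir_symm := by
    rintro a c ⟨h1, h2, h3⟩
    exact ⟨h2, h1, G.undir_symm _ _ h3⟩

/-- Marginalize a list of nodes out of G, one at a time. -/
def margList {β : Type*} (G : MixedGraph β) (L : List β) : MixedGraph β := L.foldl marg G

/-- Directed edges of the DAG G'': those of G' among `V ∪ ε`, plus
`ε^A → S_{ε^Aε^B} ← ε^B` for each undirected edge `ε^A − ε^B` of G'. -/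
def dagDir (G : MixedGraph α) : ((α ⊕ α) ⊕ Sym2 α) → ((α ⊕ α) ⊕ Sym2 α) → Prop
  | Sum.inl x, Sum.inl y => (eamp G).dir x y
  | Sum.inl (Sum.inr x), Sum.inr s => ∃ y, G.undir x y ∧ s = s(x, y)
  | _, _ => False

/-- The DAG G'' obtained from G' by replacing each `ε^A − ε^B` with
`ε^A → S_{ε^Aε^B} ← ε^B`, where the selection nodes are fresh. -/
def dagOf (G : MixedGraph α) : MixedGraph ((α ⊕ α) ⊕ Sym2 α) where
  dir := dagDir G
  undir _ _ := False
  undir_symm := by intro a b h; exact h.elim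

/-- The set S of selection nodes of G''. -/
def selNodes (G : MixedGraph α) : Set ((α ⊕ α) ⊕ Sym2 α) :=
  {v | ∃ x y, G.undir x y ∧ v = Sum.inr s(x, y)}

/-- The deterministic relationships of G'' (the same as those of G'). -/
def dagDet (G : MixedGraph α) : Set (Set ((α ⊕ α) ⊕ Sym2 α) × ((α ⊕ α) ⊕ Sym2 α)) :=
  {p | ∃ q ∈ eampDet G, p = (Sum.inl '' q.1, Sum.inl q.2)}

/-- Structural characterization of EAMP CGs over `W ∪ ε`: a chain graph whose
undirected edges join only error nodes and whose error nodes have no incoming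
directed edges. -/
def IsEAMPStruct (G : MixedGraph (α ⊕ α)) : Prop :=
  G.IsChainGraph ∧
  (∀ a b, G.undir a b → (∃ x, a = Sum.inr x) ∧ ∃ y, b = Sum.inr y) ∧
  (∀ a x, ¬ G.dir a (Sum.inr x))

/-- K is a connectivity component: a maximal set connected by undirected paths. -/
def IsConnComp {β : Type*} (G : MixedGraph β) (K : Set β) : Prop :=
  ∃ a, K = {b | Relation.ReflTransGen G.undir a b}

end EAMP

namespace Stmt11Aux

open MixedGraph

variable {β : Type*}

inductive Arr : Type where
  | start | head | tail | line
deriving DecidableEq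

inductive Ecode : Type where
  | eout | einto | eline
deriving DecidableEq

def isTpx : Arr → Ecode → Prop
  | .head, .einto => True
  | .head, .eline => True
  | .line, .einto => True
  | _, _ => False

@[simp] lemma isTpx_he : isTpx .head .einto := trivial
@[simp] lemma isTpx_hl : isTpx .head .eline := trivial
@[simp] lemma isTpx_le : isTpx .line .einto := trivial
@[simp] lemma isTpx_ho : ¬ isTpx .head .eout := fun h => h
@[simp] lemma isTpx_start (e : Ecode) : ¬ isTpx .start e := by cases e <;> exact fun h => h
@[simp] lemma isTpx_tail (e : Ecode) : ¬ isTpx .tail e := by cases e <;> exact fun h => h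
@[simp] lemma isTpx_lo : ¬ isTpx .line .eout := fun h => h
@[simp] lemma isTpx_ll : ¬ isTpx .line .eline := fun h => h

section

variable (H : MixedGraph β) (D : Set β)

def okT (t : Arr) (e : Ecode) (B : β) : Prop :=
  (isTpx t e → B ∈ D ∪ H.san D) ∧
  (¬ isTpx t e → t ≠ .start → B ∈ D →
    t = .line ∧ e = .eline ∧ ∃ p ∈ H.pa {B}, p ∉ D)

lemma okT_mk_tpx {t e B} (h1 : isTpx t e) (hm : B ∈ D ∪ H.san D) : okT H D t e B :=
  ⟨fun _ => hm, fun h => absurd h1 h⟩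

lemma okT_mk_not {t e B} (h1 : ¬ isTpx t e) (h2 : B ∉ D) : okT H D t e B :=
  ⟨fun h => absurd h h1, fun _ _ hB => absurd hB h2⟩

lemma okT_mk_start {e B} : okT H D .start e B :=
  ⟨fun h => absurd h (isTpx_start e), fun _ h => absurd rfl h⟩

lemma okT_mk_line {B} (h : B ∈ D → ∃ p ∈ H.pa {B}, p ∉ D) : okT H D .line .eline B :=
  ⟨fun h' => absurd h' isTpx_ll, fun _ _ hB => ⟨rfl, rfl, h hB⟩⟩

inductive Reach (y : β) : Arr → β → Prop
  | base (t : Arr) : Reach y t y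
  | out {B C : β} (t : Arr) : H.dir B C → B ∉ D → okT H D t .eout B →
      Reach y .head C → Reach y t B
  | into {B C : β} (t : Arr) : H.dir C B → C ∉ D → okT H D t .einto B →
      Reach y .tail C → Reach y t B
  | line {B C : β} (t : Arr) : H.undir B C → okT H D t .eline B →
      Reach y .line C → Reach y t B

def ok3 (A B C : β) : Prop :=
  (H.triplex A B C → B ∈ D ∪ H.san D) ∧
  (H.nontriplex A B C → B ∈ D →
    H.undir A B ∧ H.undir B C ∧ ∃ p ∈ H.pa {B}, p ∉ D)

def OpenWalk (l : List β) : Prop :=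
  H.IsRoute l ∧ ∀ A B C : β, [A, B, C] <:+: l → ok3 H D A B C

def realA : Arr → β → β → Prop
  | .head, A, B => H.dir A B
  | .tail, A, B => H.dir B A
  | .line, A, B => H.undir A B
  | .start, _, _ => False

def realE : Ecode → β → β → Prop
  | .eout, B, C => H.dir B C
  | .einto, B, C => H.dir C B
  | .eline, B, C => H.undir B C

@[simp] lemma realA_head {A B} : realA H .head A B ↔ H.dir A B := Iff.rfl
@[simp] lemma realA_tail {A B} : realA H .tail A B ↔ H.dir B A := Iff.rfl
@[simp] lemma realA_line {A B} : realA H .line A B ↔ H.undir A B := Iff.rfl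
@[simp] lemma realA_start {A B} : ¬ realA H .start A B := fun h => h
@[simp] lemma realE_eout {B C} : realE H .eout B C ↔ H.dir B C := Iff.rfl
@[simp] lemma realE_einto {B C} : realE H .einto B C ↔ H.dir C B := Iff.rfl
@[simp] lemma realE_eline {B C} : realE H .eline B C ↔ H.undir B C := Iff.rfl

lemma realA_adj {t A B} (h : realA H t A B) : H.adj A B := by
  cases t with
  | start => exact h.elim
  | head => exact Or.inl h
  | tail => exact Or.inr (Or.inl h)
  | line => exact Or.inr (Or.inr h)

lemma realE_adj {e B C} (h : realE H e B C) : H.adj B C := by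
  cases e with
  | eout => exact Or.inl h
  | einto => exact Or.inr (Or.inl h)
  | eline => exact Or.inr (Or.inr h)

lemma triplex_iff_isTpx (hs : H.Simple) {t e} {A B C : β}
    (hA : realA H t A B) (hE : realE H e B C) : H.triplex A B C ↔ isTpx t e := by
  obtain ⟨hdd, huu, hda, hdu⟩ := hs
  cases t with
  | start => exact hA.elim
  | head =>
    cases e with
    | eout =>
      simp only [realA, realE] at hA hE
      constructor
      · rintro (⟨_, h⟩ | ⟨_, h⟩ | ⟨h, _⟩)
        · exact absurd h (hda _ _ hE)
        · exact absurd h (hdu _ _ hE)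
        · exact absurd h (hdu _ _ hA)
      · exact fun h => absurd h isTpx_ho
    | einto => exact iff_of_true (Or.inl ⟨hA, hE⟩) isTpx_he
    | eline => exact iff_of_true (Or.inr (Or.inl ⟨hA, hE⟩)) isTpx_hl
  | tail =>
    simp only [realA] at hA
    have h1 : ¬ H.dir A B := hda _ _ hA
    have h2 : ¬ H.undir A B := fun h => hdu _ _ hA (H.undir_symm _ _ h)
    constructor
    · rintro (⟨h, _⟩ | ⟨h, _⟩ | ⟨h, _⟩)
      · exact absurd h h1
      · exact absurd h h1
      · exact absurd h h2
    · exact fun h => absurd h (isTpx_tail e)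
  | line =>
    simp only [realA] at hA
    have h1 : ¬ H.dir A B := fun h => hdu _ _ h hA
    cases e with
    | eout =>
      simp only [realE] at hE
      constructor
      · rintro (⟨h, _⟩ | ⟨h, _⟩ | ⟨_, h⟩)
        · exact absurd h h1
        · exact absurd h h1
        · exact absurd h (hda _ _ hE)
      · exact fun h => absurd h isTpx_lo
    | einto => exact iff_of_true (Or.inr (Or.inr ⟨hA, hE⟩)) isTpx_le
    | eline =>
      simp only [realE] at hE
      constructor
      · rintro (⟨h, _⟩ | ⟨h, _⟩ | ⟨_, h⟩)
        · exact absurd h h1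
        · exact absurd h h1
        · exact absurd (H.undir_symm _ _ hE) (fun hu => hdu _ _ h hu)
      · exact fun h => absurd h isTpx_ll

lemma okT_of_ok3 (hs : H.Simple) {t e} {A B C : β} (hA : realA H t A B) (hE : realE H e B C)
    (h : ok3 H D A B C) : okT H D t e B := by
  have htp := triplex_iff_isTpx H hs hA hE
  constructor
  · exact fun hi => h.1 (htp.mpr hi)
  · intro hni _ hBD
    have hnt : H.nontriplex A B C :=
      ⟨realA_adj H hA, realE_adj H hE, fun hc => hni (htp.mp hc)⟩
    obtain ⟨hu1, hu2, hp⟩ := h.2 hnt hBD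
    refine ⟨?_, ?_, hp⟩
    · cases t with
      | start => exact hA.elim
      | head => exact absurd hu1 (hs.2.2.2 _ _ hA)
      | tail => exact absurd (H.undir_symm _ _ hu1) (hs.2.2.2 _ _ hA)
      | line => rfl
    · cases e with
      | eout => exact absurd hu2 (hs.2.2.2 _ _ hE)
      | einto => exact absurd (H.undir_symm _ _ hu2) (hs.2.2.2 _ _ hE)
      | eline => rfl

lemma ok3_of_okT (hs : H.Simple) {t e} {A B C : β} (hA : realA H t A B) (hE : realE H e B C)
    (h : okT H D t e B) : ok3 H D A B C := by
  have htp := triplex_iff_isTpx H hs hA hE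
  constructor
  · exact fun hx => h.1 (htp.mp hx)
  · intro hnt hBD
    have hts : t ≠ .start := by rintro rfl; exact hA
    obtain ⟨ht, he, hp⟩ := h.2 (fun hi => hnt.2.2 (htp.mpr hi)) hts hBD
    subst ht; subst he
    exact ⟨hA, hE, hp⟩

end

end Stmt11Aux
namespace Stmt11Aux

open MixedGraph

variable {β : Type*}

lemma triple_infix_cons {A X C a : β} {l : List β} (h : [A, X, C] <:+: (a :: l)) :
    (A = a ∧ ∃ r, l = X :: C :: r) ∨ [A, X, C] <:+: l := by
  obtain ⟨s, t, hst⟩ := h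
  cases s with
  | nil =>
    simp only [List.nil_append, List.cons_append] at hst
    injection hst with h1 h2
    exact Or.inl ⟨h1, t, h2.symm⟩
  | cons s0 s' =>
    simp only [List.cons_append] at hst
    injection hst with h1 h2
    exact Or.inr ⟨s', t, h2⟩

lemma infix_of_append_cons_cons {p : List β} (hp : p ≠ []) (B C : β) (r : List β) :
    [p.getLast hp, B, C] <:+: (p ++ B :: C :: r) := by
  refine ⟨p.dropLast, r, ?_⟩
  conv_rhs => rw [← List.dropLast_append_getLast hp]
  simp

open Classical in
noncomputable def codeOf (H : MixedGraph β) (B C : β) : Ecode :=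
  if H.dir B C then .eout else if H.dir C B then .einto else .eline

def arrOf : Ecode → Arr
  | .eout => .head
  | .einto => .tail
  | .eline => .line

noncomputable def arrC (H : MixedGraph β) (p : List β) (B : β) : Arr :=
  match p.getLast? with
  | none => .start
  | some A => arrOf (codeOf H A B)

@[simp] lemma arrC_nil (H : MixedGraph β) (B : β) : arrC H [] B = .start := rfl

lemma arrC_concat (H : MixedGraph β) (p : List β) (A B : β) :
    arrC H (p ++ [A]) B = arrOf (codeOf H A B) := by
  simp [arrC, List.getLast?_concat]

lemma realA_arrOf_codeOf {H : MixedGraph β} {A B : β} (hadj : H.adj A B) :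
    realA H (arrOf (codeOf H A B)) A B := by
  unfold codeOf
  split_ifs with h1 h2
  · exact h1
  · exact h2
  · rcases hadj with h | h | h
    · exact absurd h h1
    · exact absurd h h2
    · exact h

lemma toReach (H : MixedGraph β) (D : Set β) (hs : H.Simple) {y : β} (hy : y ∉ D) :
    ∀ (rest p : List β) (B : β), OpenWalk H D (p ++ B :: rest) →
      (p ++ B :: rest).getLast? = some y → (p = [] → B ∉ D) →
      Reach H D y (arrC H p B) B := by
  intro rest
  induction rest with
  | nil =>
    intro p B _ hl _
    have hB : (p ++ [B]).getLast? = some B := by simp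
    rw [hB] at hl
    injection hl with hl
    subst hl
    exact Reach.base _
  | cons C rest' ih =>
    intro p B hw hl hstart
    have hassoc : p ++ B :: C :: rest' = (p ++ [B]) ++ C :: rest' := by simp
    have hw' : OpenWalk H D ((p ++ [B]) ++ C :: rest') := by rwa [hassoc] at hw
    have hl' : ((p ++ [B]) ++ C :: rest').getLast? = some y := by rwa [hassoc] at hl
    have hchain : (p ++ B :: C :: rest').Chain' H.adj := hw.1.2
    have hchain2 : ((p ++ [B]) ++ C :: rest').Chain' H.adj := by rwa [hassoc] at hchain
    have hadjBC : H.adj B C := by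
      have h := (List.isChain_append.mp hchain2).2.2
      exact h B (by simp) C rfl
    -- adjacency of last of p with B, and the ok3 triple, when p ≠ []
    have hfacts : ∀ hp : p ≠ [], H.adj (p.getLast hp) B ∧ ok3 H D (p.getLast hp) B C := by
      intro hp
      constructor
      · have h := (List.isChain_append.mp hchain).2.2
        exact h (p.getLast hp) (List.getLast?_eq_getLast hp ▸ rfl) B rfl
      · exact hw.2 _ _ _ (infix_of_append_cons_cons hp B C rest')
    have hrealA : ∀ hp : p ≠ [], realA H (arrC H p B) (p.getLast hp) B := by
      intro hp
      have h1 : p.getLast? = some (p.getLast hp) := List.getLast?_eq_getLast hp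
      have h2 : arrC H p B = arrOf (codeOf H (p.getLast hp) B) := by simp [arrC, h1]
      rw [h2]
      exact realA_arrOf_codeOf ((hfacts hp).1)
    have ihC : Reach H D y (arrC H (p ++ [B]) C) C :=
      ih (p ++ [B]) C hw' hl' (by simp)
    rw [arrC_concat] at ihC
    rcases hadjBC with hbc | hcb | hbc
    · -- dir B C
      have hcode : codeOf H B C = .eout := if_pos hbc
      rw [hcode] at ihC
      have hBD : B ∉ D := by
        cases hp : p with
        | nil => exact hstart hp
        | cons a p' =>
          have hp' : p ≠ [] := by simp [hp]
          obtain ⟨hadjAB, htri⟩ := hfacts hp'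
          have hnt : H.nontriplex (p.getLast hp') B C := by
            refine ⟨hadjAB, Or.inl hbc, ?_⟩
            rintro (⟨_, h2⟩ | ⟨_, h2⟩ | ⟨_, h2⟩)
            · exact hs.2.2.1 _ _ hbc h2
            · exact hs.2.2.2 _ _ hbc h2
            · exact hs.2.2.1 _ _ hbc h2
          intro hBD
          exact hs.2.2.2 _ _ hbc (htri.2 hnt hBD).2.1
      have hok : okT H D (arrC H p B) .eout B := by
        cases hp : p with
        | nil => simpa using okT_mk_start H D
        | cons a p' =>
          have hp' : p ≠ [] := by simp [hp]
          rw [← hp]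
          exact okT_of_ok3 H D hs (hrealA hp') hbc (hfacts hp').2
      exact Reach.out _ hbc hBD hok ihC
    · -- dir C B
      have hcode : codeOf H B C = .einto := by
        unfold codeOf
        rw [if_neg (hs.2.2.1 _ _ hcb), if_pos hcb]
      rw [hcode] at ihC
      have hCD : C ∉ D := by
        cases hr : rest' with
        | nil =>
          have : (p ++ [B, C]).getLast? = some C := by simp
          rw [hr] at hl
          have hCy : C = y := by
            have h2 : (p ++ B :: C :: ([] : List β)).getLast? = some C := by
              simpa using this
            rw [h2] at hl; injection hl
          rw [hCy]; exact hy
        | cons d rest'' =>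
          have hinf2 : [B, C, d] <:+: ((p ++ [B]) ++ C :: d :: rest'') := by
            have := infix_of_append_cons_cons (p := p ++ [B]) (by simp) C d rest''
            simpa using this
          have htri2 : ok3 H D B C d := by
            apply hw.2
            rw [hassoc, hr]
            exact hinf2
          have hadjCd : H.adj C d := by
            have h := (List.isChain_append.mp hchain2).2.1
            rw [hr] at h
            exact (List.isChain_cons_cons.mp h).1
          have hnt : H.nontriplex B C d := by
            refine ⟨Or.inr (Or.inl hcb), hadjCd, ?_⟩
            rintro (⟨h2, _⟩ | ⟨h2, _⟩ | ⟨h2, _⟩)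
            · exact hs.2.2.1 _ _ hcb h2
            · exact hs.2.2.1 _ _ hcb h2
            · exact hs.2.2.2 _ _ hcb (H.undir_symm _ _ h2)
          intro hCD
          exact hs.2.2.2 _ _ hcb (H.undir_symm _ _ (htri2.2 hnt hCD).1)
      have hok : okT H D (arrC H p B) .einto B := by
        cases hp : p with
        | nil => simpa using okT_mk_start H D
        | cons a p' =>
          have hp' : p ≠ [] := by simp [hp]
          rw [← hp]
          exact okT_of_ok3 H D hs (hrealA hp') hcb (hfacts hp').2
      exact Reach.into _ hcb hCD hok ihC
    · -- undir B C
      have hcode : codeOf H B C = .eline := by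
        unfold codeOf
        rw [if_neg (fun h => hs.2.2.2 _ _ h hbc),
          if_neg (fun h => hs.2.2.2 _ _ h (H.undir_symm _ _ hbc))]
      rw [hcode] at ihC
      have hok : okT H D (arrC H p B) .eline B := by
        cases hp : p with
        | nil => simpa using okT_mk_start H D
        | cons a p' =>
          have hp' : p ≠ [] := by simp [hp]
          rw [← hp]
          exact okT_of_ok3 H D hs (hrealA hp') hbc (hfacts hp').2
      exact Reach.line _ hbc hok ihC

lemma toReach_start {H : MixedGraph β} {D : Set β} (hs : H.Simple) {x y : β} {l : List β}
    (hx : x ∉ D) (hy : y ∉ D) (hw : OpenWalk H D l)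
    (hh : l.head? = some x) (hl : l.getLast? = some y) : Reach H D y .start x := by
  cases l with
  | nil => exact absurd hh (by simp)
  | cons a rest =>
    injection hh with hh
    subst hh
    have := toReach H D hs hy rest [] _ (by simpa using hw) (by simpa using hl) (fun _ => hx)
    simpa using this

lemma reach_toWalk (H : MixedGraph β) (D : Set β) (hs : H.Simple) {y : β} {t : Arr} {B : β}
    (h : Reach H D y t B) :
    ∃ l : List β, l.head? = some B ∧ l.getLast? = some y ∧ l.Chain' H.adj ∧
      (∀ A X C : β, [A, X, C] <:+: l → ok3 H D A X C) ∧
      (∀ A : β, realA H t A B → ∀ (C : β) (r : List β), l = B :: C :: r → ok3 H D A B C) := by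
  induction h with
  | base t =>
    refine ⟨[y], rfl, rfl, List.isChain_singleton y, ?_, ?_⟩
    · intro A X C h
      have := h.length_le
      simp at this
    · rintro A _ C r h
      injection h with _ h
      exact absurd h (by simp)
  | @out B C t hdir hBD hok hr ih =>
    obtain ⟨l, hh, hl, hc, h3, hpre⟩ := ih
    obtain ⟨l₀, rfl⟩ : ∃ l₀, l = C :: l₀ := by
      cases l with
      | nil => exact absurd hh (by simp)
      | cons c l0 => injection hh with hh; exact ⟨l0, by rw [hh]⟩
    refine ⟨B :: C :: l₀, rfl, by rwa [List.getLast?_cons_cons], ?_, ?_, ?_⟩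
    · exact List.isChain_cons_cons.mpr ⟨Or.inl hdir, hc⟩
    · intro A X C' hinf
      rcases triple_infix_cons hinf with ⟨rfl, r, heq⟩ | hinf'
      · injection heq with h1 h2
        subst h1
        exact hpre A hdir C' r (by rw [h2])
      · exact h3 _ _ _ hinf'
    · intro A hA C2 r heq
      injection heq with _ h2
      injection h2 with h1 _
      subst h1
      exact ok3_of_okT H D hs (A := A) (e := .eout) hA hdir hok
  | @into B C t hdir hCD hok hr ih =>
    obtain ⟨l, hh, hl, hc, h3, hpre⟩ := ih
    obtain ⟨l₀, rfl⟩ : ∃ l₀, l = C :: l₀ := by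
      cases l with
      | nil => exact absurd hh (by simp)
      | cons c l0 => injection hh with hh; exact ⟨l0, by rw [hh]⟩
    refine ⟨B :: C :: l₀, rfl, by rwa [List.getLast?_cons_cons], ?_, ?_, ?_⟩
    · exact List.isChain_cons_cons.mpr ⟨Or.inr (Or.inl hdir), hc⟩
    · intro A X C' hinf
      rcases triple_infix_cons hinf with ⟨rfl, r, heq⟩ | hinf'
      · injection heq with h1 h2
        subst h1
        exact hpre A hdir C' r (by rw [h2])
      · exact h3 _ _ _ hinf'
    · intro A hA C2 r heq
      injection heq with _ h2
      injection h2 with h1 _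
      subst h1
      exact ok3_of_okT H D hs (A := A) (e := .einto) hA hdir hok
  | @line B C t hdir hok hr ih =>
    obtain ⟨l, hh, hl, hc, h3, hpre⟩ := ih
    obtain ⟨l₀, rfl⟩ : ∃ l₀, l = C :: l₀ := by
      cases l with
      | nil => exact absurd hh (by simp)
      | cons c l0 => injection hh with hh; exact ⟨l0, by rw [hh]⟩
    refine ⟨B :: C :: l₀, rfl, by rwa [List.getLast?_cons_cons], ?_, ?_, ?_⟩
    · exact List.isChain_cons_cons.mpr ⟨Or.inr (Or.inr hdir), hc⟩
    · intro A X C' hinf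
      rcases triple_infix_cons hinf with ⟨rfl, r, heq⟩ | hinf'
      · injection heq with h1 h2
        subst h1
        exact hpre A hdir C' r (by rw [h2])
      · exact h3 _ _ _ hinf'
    · intro A hA C2 r heq
      injection heq with _ h2
      injection h2 with h1 _
      subst h1
      exact ok3_of_okT H D hs (A := A) (e := .eline) hA hdir hok

lemma reach_toOpenWalk {H : MixedGraph β} {D : Set β} (hs : H.Simple) {x y : β}
    (h : Reach H D y .start x) :
    ∃ l, OpenWalk H D l ∧ l.head? = some x ∧ l.getLast? = some y := by
  obtain ⟨l, hh, hl, hc, h3, -⟩ := reach_toWalk H D hs h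
  refine ⟨l, ⟨⟨?_, hc⟩, h3⟩, hh, hl⟩
  rintro rfl
  exact absurd hh (by simp)

end Stmt11Aux
namespace Stmt11Aux

open MixedGraph

variable {β : Type*}

lemma adj_symm (H : MixedGraph β) {a b : β} (h : H.adj a b) : H.adj b a := by
  rcases h with h | h | h
  · exact Or.inr (Or.inl h)
  · exact Or.inl h
  · exact Or.inr (Or.inr (H.undir_symm _ _ h))

lemma triplex_comm (H : MixedGraph β) {A B C : β} (h : H.triplex A B C) : H.triplex C B A := by
  rcases h with ⟨h1, h2⟩ | ⟨h1, h2⟩ | ⟨h1, h2⟩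
  · exact Or.inl ⟨h2, h1⟩
  · exact Or.inr (Or.inr ⟨H.undir_symm _ _ h2, h1⟩)
  · exact Or.inr (Or.inl ⟨h2, H.undir_symm _ _ h1⟩)

lemma ok3_symm (H : MixedGraph β) (D : Set β) {A B C : β} (h : ok3 H D A B C) :
    ok3 H D C B A := by
  constructor
  · exact fun ht => h.1 (triplex_comm H ht)
  · intro hnt hBD
    have hnt' : H.nontriplex A B C :=
      ⟨adj_symm H hnt.2.1, adj_symm H hnt.1, fun hc => hnt.2.2 (triplex_comm H hc)⟩
    obtain ⟨h1, h2, h3⟩ := h.2 hnt' hBD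
    exact ⟨H.undir_symm _ _ h2, H.undir_symm _ _ h1, h3⟩

lemma openWalk_reverse (H : MixedGraph β) (D : Set β) {l : List β} (h : OpenWalk H D l) :
    OpenWalk H D l.reverse := by
  refine ⟨⟨by simpa using h.1.1, ?_⟩, ?_⟩
  · show l.reverse.IsChain H.adj
    rw [List.isChain_reverse]
    exact List.IsChain.imp (fun a b hab => adj_symm H hab) h.1.2
  · intro A B C hinf
    have h2 : [C, B, A] <:+: l := by
      have h3 := hinf.reverse
      simpa using h3
    exact ok3_symm H D (h.2 _ _ _ h2)

lemma mem_union_san_trans (H : MixedGraph β) (D : Set β) {B w : β}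
    (h : Relation.TransGen H.dir B w) (hw : w ∈ D ∪ H.san D) : B ∈ D ∪ H.san D := by
  by_cases hB : B ∈ D
  · exact Or.inl hB
  · right
    rcases hw with hw | ⟨_, w', hw', ht⟩
    · exact ⟨hB, w, hw, h⟩
    · exact ⟨hB, w', hw', h.trans ht⟩

lemma run_lemma (H : MixedGraph β) (D : Set β) (hs : H.Simple) :
    ∀ (m p : List β) (B c : β), OpenWalk H D (p ++ B :: c :: m) → H.dir B c →
      B ∈ D ∪ H.san D ∨ ∀ v ∈ c :: m, Relation.TransGen H.dir B v := by
  intro m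
  induction m with
  | nil =>
    intro p B c _ hBc
    refine Or.inr ?_
    intro v hv
    simp only [List.mem_cons, List.not_mem_nil, or_false] at hv
    subst hv
    exact .single hBc
  | cons d m' ih =>
    intro p B c hw hBc
    have hassoc : p ++ B :: c :: d :: m' = (p ++ [B]) ++ c :: d :: m' := by simp
    have htri : ok3 H D B c d := by
      apply hw.2
      rw [hassoc]
      simpa using infix_of_append_cons_cons (p := p ++ [B]) (by simp) c d m'
    have hadjcd : H.adj c d := by
      have h2 : ((p ++ [B]) ++ c :: d :: m').Chain' H.adj := by
        rw [← hassoc]; exact hw.1.2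
      have h3 := (List.isChain_append.mp h2).2.1
      exact (List.isChain_cons_cons.mp h3).1
    rcases hadjcd with hcd | hdc | hcd
    · have hw' : OpenWalk H D ((p ++ [B]) ++ c :: d :: m') := by rwa [hassoc] at hw
      rcases ih (p ++ [B]) c d hw' hcd with hc | hrun
      · exact Or.inl (mem_union_san_trans H D (.single hBc) hc)
      · refine Or.inr ?_
        intro v hv
        rcases List.mem_cons.mp hv with rfl | hv'
        · exact .single hBc
        · exact (Relation.TransGen.single hBc).trans (hrun v hv')
    · exact Or.inl (mem_union_san_trans H D (.single hBc) (htri.1 (Or.inl ⟨hBc, hdc⟩)))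
    · exact Or.inl (mem_union_san_trans H D (.single hBc) (htri.1 (Or.inr (Or.inl ⟨hBc, hcd⟩))))

lemma exists_dup {l : List β} (h : ¬ l.Nodup) :
    ∃ (p : List β) (B : β) (m q : List β), l = p ++ B :: m ++ B :: q := by
  induction l with
  | nil => exact absurd List.nodup_nil h
  | cons a r ih =>
    by_cases ha : a ∈ r
    · obtain ⟨m, q, rfl⟩ := List.append_of_mem ha
      exact ⟨[], a, m, q, rfl⟩
    · have hr : ¬ r.Nodup := fun hr => h (List.nodup_cons.mpr ⟨ha, hr⟩)
      obtain ⟨p, B, m, q, rfl⟩ := ih hr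
      exact ⟨a :: p, B, m, q, rfl⟩

lemma infix_cons_of_infix {l t : List β} {a : β} (h : l <:+: t) : l <:+: (a :: t) := by
  obtain ⟨s, u, hsu⟩ := h
  exact ⟨a :: s, u, by simp [hsu]⟩

lemma triple_infix_splice {p q : List β} {B A X C : β}
    (h : [A, X, C] <:+: (p ++ B :: q)) :
    [A, X, C] <:+: (p ++ [B]) ∨ [A, X, C] <:+: (B :: q) ∨
      (p.getLast? = some A ∧ X = B ∧ q.head? = some C) := by
  induction p with
  | nil => exact Or.inr (Or.inl (by simpa using h))
  | cons a p' ih =>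
    rcases triple_infix_cons (by simpa using h) with ⟨rfl, r, heq⟩ | h'
    · cases p' with
      | nil =>
        simp only [List.nil_append] at heq
        injection heq with h1 h2
        exact Or.inr (Or.inr ⟨rfl, h1.symm, by rw [h2]; rfl⟩)
      | cons b p'' =>
        simp only [List.cons_append] at heq
        injection heq with h1 h2
        cases p'' with
        | nil =>
          simp only [List.nil_append] at h2
          injection h2 with h3 _
          exact Or.inl ⟨[], [], by simp [h1, h3]⟩
        | cons c p''' =>
          simp only [List.cons_append] at h2
          injection h2 with h3 _
          exact Or.inl ⟨[], p''' ++ [B], by simp [h1, h3]⟩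
    · rcases ih h' with h1 | h1 | ⟨hg, hX, hq⟩
      · exact Or.inl (infix_cons_of_infix h1)
      · exact Or.inr (Or.inl h1)
      · refine Or.inr (Or.inr ⟨?_, hX, hq⟩)
        cases p' with
        | nil => simp at hg
        | cons b p'' => rw [List.getLast?_cons_cons]; exact hg

end Stmt11Aux
namespace Stmt11Aux

open MixedGraph

variable {β : Type*}

lemma chain'_rel_of_infix {R : β → β → Prop} {l : List β} {a b : β}
    (hc : l.Chain' R) (h : [a, b] <:+: l) : R a b := by
  obtain ⟨s, t, hst⟩ := h
  rw [← hst] at hc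
  have h2 : (s ++ a :: b :: t).Chain' R := by simpa using hc
  exact (List.isChain_cons_cons.mp (List.isChain_append.mp h2).2.1).1

lemma junction_ok3 (H : MixedGraph β) (D : Set β) (hs : H.Simple)
    (hacy : ∀ v : β, ¬ Relation.TransGen H.dir v v)
    {p m' q' : List β} {A B c1 C : β}
    (hw : OpenWalk H D (p ++ B :: c1 :: (m' ++ B :: C :: q')))
    (hpA : p.getLast? = some A) :
    ok3 H D A B C := by
  have hp : p ≠ [] := by rintro rfl; simp at hpA
  obtain ⟨p0, rfl⟩ : ∃ p0, p = p0 ++ [A] := by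
    refine ⟨p.dropLast, ?_⟩
    have h6 := List.dropLast_append_getLast hp
    have h8 := List.getLast?_eq_getLast hp
    rw [hpA] at h8
    injection h8 with h9
    rw [h9]
    exact h6.symm
  have hch : ((p0 ++ [A]) ++ B :: c1 :: (m' ++ B :: C :: q')).Chain' H.adj := hw.1.2
  set a2 := (c1 :: m').getLast (List.cons_ne_nil _ _) with ha2
  obtain ⟨w, hwdef⟩ : ∃ w, c1 :: m' = w ++ [a2] :=
    ⟨(c1 :: m').dropLast, (List.dropLast_append_getLast _).symm⟩
  have hrw : ∀ r : List β, c1 :: (m' ++ r) = w ++ a2 :: r := by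
    intro r
    rw [show c1 :: (m' ++ r) = (c1 :: m') ++ r from rfl, hwdef]
    simp
  have hadjAB : H.adj A B :=
    chain'_rel_of_infix hch ⟨p0, c1 :: (m' ++ B :: C :: q'), by simp⟩
  have hadjBc1 : H.adj B c1 :=
    chain'_rel_of_infix hch ⟨p0 ++ [A], m' ++ B :: C :: q', by simp⟩
  have hadjBC : H.adj B C :=
    chain'_rel_of_infix hch ⟨p0 ++ A :: B :: w ++ [a2], q', by rw [hrw (B :: C :: q')]; simp⟩
  have hadja2B : H.adj a2 B :=
    chain'_rel_of_infix hch ⟨p0 ++ A :: B :: w, C :: q', by rw [hrw (B :: C :: q')]; simp⟩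
  obtain ⟨n0, rest0, hm0⟩ : ∃ n0 rest0, m' ++ B :: C :: q' = n0 :: rest0 := by
    cases m' with
    | nil => exact ⟨B, C :: q', rfl⟩
    | cons d m'' => exact ⟨d, m'' ++ B :: C :: q', rfl⟩
  have t_i : ok3 H D A B c1 := hw.2 _ _ _ ⟨p0, m' ++ B :: C :: q', by simp⟩
  have t_j : ok3 H D a2 B C := hw.2 _ _ _ ⟨p0 ++ A :: B :: w, q', by rw [hrw (B :: C :: q')]; simp⟩
  have t_ip1 : ok3 H D B c1 n0 := hw.2 _ _ _ ⟨p0 ++ [A], rest0, by rw [hm0]; simp⟩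
  have hadjc1n0 : H.adj c1 n0 :=
    chain'_rel_of_infix hch ⟨p0 ++ [A, B], rest0, by rw [hm0]; simp⟩
  constructor
  · -- triplex condition
    intro htpx
    by_cases hBD : B ∈ D
    · exact Or.inl hBD
    have hAB : H.dir A B ∨ H.undir A B := by
      rcases htpx with ⟨h1, _⟩ | ⟨h1, _⟩ | ⟨h1, _⟩
      exacts [Or.inl h1, Or.inl h1, Or.inr h1]
    by_cases htpx1 : H.triplex A B c1
    · exact t_i.1 htpx1
    rcases hadjBc1 with h1 | h1 | h1
    · rcases run_lemma H D hs (m' ++ B :: C :: q') (p0 ++ [A]) B c1 hw h1 with hres | hrun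
      · exact hres
      · exact absurd (hrun B (by simp)) (hacy B)
    · exact absurd (hAB.elim (fun h => Or.inl ⟨h, h1⟩) (fun h => Or.inr (Or.inr ⟨h, h1⟩))) htpx1
    · have hABu : H.undir A B := by
        rcases hAB with h | h
        · exact absurd (Or.inr (Or.inl ⟨h, h1⟩)) htpx1
        · exact h
      have hCBd : H.dir C B := by
        rcases htpx with ⟨h2, _⟩ | ⟨h2, _⟩ | ⟨_, h2⟩
        · exact absurd hABu (hs.2.2.2 _ _ h2)
        · exact absurd hABu (hs.2.2.2 _ _ h2)
        · exact h2
      by_cases htpxj : H.triplex a2 B C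
      · exact t_j.1 htpxj
      rcases hadja2B with h2 | h2 | h2
      · exact absurd (Or.inl ⟨h2, hCBd⟩) htpxj
      · have hwrev := openWalk_reverse H D hw
        have hXrev : ((p0 ++ [A]) ++ B :: c1 :: (m' ++ B :: C :: q')).reverse =
            (q'.reverse ++ [C]) ++ B :: a2 :: (w.reverse ++ B :: A :: p0.reverse) := by
          rw [hrw (B :: C :: q')]
          simp
        rcases run_lemma H D hs (w.reverse ++ B :: A :: p0.reverse) (q'.reverse ++ [C]) B a2
            (by rwa [hXrev] at hwrev) h2 with hres | hrun
        · exact hres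
        · exact absurd (hrun B (by simp)) (hacy B)
      · exact absurd (Or.inr (Or.inr ⟨h2, hCBd⟩)) htpxj
  · -- nontriplex condition
    intro hnt hBD
    have hAB : H.dir A B ∨ H.undir A B := by
      rcases hadjAB with h | h | h
      · exact Or.inl h
      · exfalso
        have hnti : H.nontriplex A B c1 := by
          refine ⟨Or.inr (Or.inl h), hadjBc1, ?_⟩
          rintro (⟨h2, _⟩ | ⟨h2, _⟩ | ⟨h2, _⟩)
          · exact hs.2.2.1 _ _ h h2
          · exact hs.2.2.1 _ _ h h2
          · exact hs.2.2.2 _ _ h (H.undir_symm _ _ h2)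
        exact hs.2.2.2 _ _ h (H.undir_symm _ _ (t_i.2 hnti hBD).1)
      · exact Or.inr h
    have hCB : H.dir C B ∨ H.undir B C := by
      rcases hadjBC with h | h | h
      · exfalso
        have hntj : H.nontriplex a2 B C := by
          refine ⟨hadja2B, Or.inl h, ?_⟩
          rintro (⟨_, h2⟩ | ⟨_, h2⟩ | ⟨_, h2⟩)
          · exact hs.2.2.1 _ _ h h2
          · exact hs.2.2.2 _ _ h h2
          · exact hs.2.2.1 _ _ h h2
        exact hs.2.2.2 _ _ h (t_j.2 hntj hBD).2.1
      · exact Or.inl h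
      · exact Or.inr h
    have hABu : H.undir A B := by
      rcases hAB with h | h
      · exfalso
        rcases hCB with h2 | h2
        · exact hnt.2.2 (Or.inl ⟨h, h2⟩)
        · exact hnt.2.2 (Or.inr (Or.inl ⟨h, h2⟩))
      · exact h
    have hBCu : H.undir B C := by
      rcases hCB with h2 | h2
      · exact absurd (Or.inr (Or.inr ⟨hABu, h2⟩)) hnt.2.2
      · exact h2
    refine ⟨hABu, hBCu, ?_⟩
    by_cases htpx1 : H.triplex A B c1
    · rcases htpx1 with ⟨h1, _⟩ | ⟨h1, _⟩ | ⟨_, h1⟩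
      · exact absurd hABu (hs.2.2.2 _ _ h1)
      · exact absurd hABu (hs.2.2.2 _ _ h1)
      · refine ⟨c1, ⟨?_, B, rfl, h1⟩, ?_⟩
        · intro hc
          rw [Set.mem_singleton_iff] at hc
          subst hc
          exact hs.1 _ h1
        · have hntc : H.nontriplex B c1 n0 := by
            refine ⟨hadjBc1, hadjc1n0, ?_⟩
            rintro (⟨h2, _⟩ | ⟨h2, _⟩ | ⟨h2, _⟩)
            · exact hs.2.2.1 _ _ h1 h2
            · exact hs.2.2.1 _ _ h1 h2
            · exact hs.2.2.2 _ _ h1 (H.undir_symm _ _ h2)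
          intro hc1D
          exact hs.2.2.2 _ _ h1 (H.undir_symm _ _ (t_ip1.2 hntc hc1D).1)
    · exact (t_i.2 ⟨hadjAB, hadjBc1, htpx1⟩ hBD).2.2

end Stmt11Aux
namespace Stmt11Aux

open MixedGraph

variable {β : Type*}

lemma shorten (H : MixedGraph β) (D : Set β) (hs : H.Simple)
    (hacy : ∀ v : β, ¬ Relation.TransGen H.dir v v) :
    ∀ (n : ℕ) (l : List β), l.length ≤ n → OpenWalk H D l →
      ∃ l', OpenWalk H D l' ∧ l'.Nodup ∧ l'.head? = l.head? ∧ l'.getLast? = l.getLast? := by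
  intro n
  induction n with
  | zero =>
    intro l hn hw
    exact absurd (List.length_eq_zero_iff.mp (Nat.le_zero.mp hn)) hw.1.1
  | succ n ih =>
    intro l hn hw
    by_cases hnd : l.Nodup
    · exact ⟨l, hw, hnd, rfl, rfl⟩
    obtain ⟨p, B, m, q, rfl⟩ := exists_dup hnd
    obtain ⟨c1, m', rfl⟩ : ∃ c1 m', m = c1 :: m' := by
      cases m with
      | nil =>
        exfalso
        have h2 : (p ++ B :: B :: q).Chain' H.adj := by simpa using hw.1.2
        have h4 : H.adj B B := chain'_rel_of_infix h2 ⟨p, q, by simp⟩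
        rcases h4 with h | h | h
        exacts [hs.1 _ h, hs.1 _ h, hs.2.1 _ h]
      | cons c1 m' => exact ⟨c1, m', rfl⟩
    have hwc : OpenWalk H D (p ++ B :: c1 :: (m' ++ B :: q)) := by
      have heq : p ++ B :: (c1 :: m') ++ B :: q = p ++ B :: c1 :: (m' ++ B :: q) := by simp
      rwa [heq] at hw
    have hch := hwc.1.2
    have hsplit1 := List.isChain_append.mp
      (show (p ++ (B :: c1 :: (m' ++ B :: q))).Chain' H.adj from hch)
    have hsplit2 := List.isChain_append.mp
      (show ((p ++ B :: c1 :: m') ++ (B :: q)).Chain' H.adj by simpa using hch)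
    have hwalk' : OpenWalk H D (p ++ B :: q) := by
      refine ⟨⟨by simp, ?_⟩, ?_⟩
      · refine List.isChain_append.mpr ⟨hsplit1.1, hsplit2.2.1, ?_⟩
        intro x hx y hy
        simp only [List.head?_cons, Option.mem_def, Option.some.injEq] at hy
        subst hy
        exact hsplit1.2.2 x hx B rfl
      · intro A X C hinf
        rcases triple_infix_splice hinf with h1 | h1 | ⟨hgA, rfl, hqC⟩
        · exact hwc.2 _ _ _ (h1.trans ⟨[], c1 :: (m' ++ B :: q), by simp⟩)
        · exact hwc.2 _ _ _ (h1.trans ⟨p ++ B :: c1 :: m', [], by simp⟩)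
        · obtain ⟨C', q0, rfl⟩ : ∃ C' q0, q = C' :: q0 := by
            cases q with
            | nil => simp at hqC
            | cons C' q0 => exact ⟨C', q0, rfl⟩
          simp only [List.head?_cons, Option.some.injEq] at hqC
          subst hqC
          exact junction_ok3 H D hs hacy hwc hgA
    have hlen : (p ++ B :: q).length ≤ n := by
      simp only [List.length_append, List.length_cons] at hn ⊢
      omega
    obtain ⟨l', hw', hnd', hh', hl'⟩ := ih (p ++ B :: q) hlen hwalk'
    refine ⟨l', hw', hnd', ?_, ?_⟩
    · rw [hh']
      cases p <;> simp
    · rw [hl']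
      have e1 : (p ++ B :: q).getLast? = (B :: q).getLast? := List.getLast?_append_cons p B q
      have e2 : (p ++ B :: (c1 :: m') ++ B :: q).getLast? = (B :: q).getLast? := by
        rw [show p ++ B :: (c1 :: m') ++ B :: q = (p ++ B :: c1 :: m') ++ B :: q by simp]
        exact List.getLast?_append_cons _ B q
      rw [e1, e2]

lemma ampSep_iff_not_reach (H : MixedGraph β) (D : Set β) (hs : H.Simple)
    (hacy : ∀ v : β, ¬ Relation.TransGen H.dir v v) {X Y : Set β}
    (hX : ∀ x ∈ X, x ∉ D) (hY : ∀ y ∈ Y, y ∉ D) :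
    H.AMPSep D X Y ↔ ∀ x ∈ X, ∀ y ∈ Y, ¬ Reach H D y .start x := by
  constructor
  · intro hsep x hx y hy hr
    obtain ⟨l, hw, hh, hl⟩ := reach_toOpenWalk hs hr
    obtain ⟨l', hw', hnd, hh', hl'⟩ := shorten H D hs hacy l.length l le_rfl hw
    refine hsep l' x y hx hy (by rw [hh', hh]) (by rw [hl', hl]) ?_
    exact ⟨hw'.1, hnd, fun A B C hinf => (hw'.2 A B C hinf).1,
      fun A B C hinf => (hw'.2 A B C hinf).2⟩
  · intro h l x y hx hy hh hl hop
    refine h x hx y hy (toReach_start hs (hX x hx) (hY y hy) ?_ hh hl)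
    exact ⟨hop.1, fun A B C hinf => ⟨hop.2.2.1 A B C hinf, hop.2.2.2 A B C hinf⟩⟩

lemma chain_getD {R : β → β → Prop} (d : β) : ∀ {a : β} {l : List β}, List.Chain R a l →
    ∀ i : ℕ, i + 1 < (a :: l).length →
      R ((a :: l).getD i d) ((a :: l).getD (i + 1) d) := by
  intro a l
  induction l generalizing a with
  | nil => intro _ i h; simp at h
  | cons c l' ih =>
    intro hch i h
    rcases List.chain_cons.mp hch with ⟨hac, hch'⟩
    cases i with
    | zero => exact hac
    | succ i' =>
      have h' : i' + 1 < (c :: l').length := by simpa using h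
      exact ih hch' i' h'

lemma getD_last (d : β) : ∀ (l : List β) (h : l ≠ []), l.getD (l.length - 1) d = l.getLast h := by
  intro l
  induction l with
  | nil => intro h; exact absurd rfl h
  | cons a t ih =>
    intro _
    cases t with
    | nil => rfl
    | cons b t' =>
      have h2 := ih (List.cons_ne_nil b t')
      rw [List.getLast_cons (List.cons_ne_nil b t')]
      simpa using h2

lemma transGen_irrefl_of_chainGraph (H : MixedGraph β) (hcg : H.IsChainGraph) :
    ∀ v : β, ¬ Relation.TransGen H.dir v v := by
  intro v hv
  apply hcg.2
  obtain ⟨b, hvb, hbv⟩ := Relation.TransGen.head'_iff.mp hv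
  obtain ⟨l, hchain, hlast⟩ := List.exists_isChain_cons_of_relationReflTransGen hbv
  have hch2 : List.Chain H.dir v (b :: l) := List.Chain.cons hvb hchain
  refine ⟨l.length, fun i => (v :: b :: l).getD i.1 v, ?_, ?_, ?_⟩
  · have h0 : ((0 : Fin (l.length + 2)) : ℕ) = 0 := rfl
    have hL : ((Fin.last (l.length + 1)) : ℕ) = l.length + 1 := rfl
    simp only [h0, hL]
    have h2 : (v :: b :: l).getD (l.length + 1) v = (v :: b :: l).getLast (by simp) := by
      have := getD_last v (v :: b :: l) (by simp)
      simpa using this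
    rw [h2]
    rw [List.getLast_cons (by simp : b :: l ≠ [])]
    exact hlast.symm
  · have h1 : ((1 : Fin (l.length + 2)) : ℕ) = 1 := rfl
    have h0 : ((0 : Fin (l.length + 2)) : ℕ) = 0 := rfl
    simp only [h0, h1]
    exact hvb
  · intro i
    left
    have hc : ((i.castSucc : Fin (l.length + 2)) : ℕ) = i.1 := rfl
    have hsv : ((i.succ : Fin (l.length + 2)) : ℕ) = i.1 + 1 := rfl
    simp only [hc, hsv]
    exact chain_getD v hch2 i.1 (by simpa using i.isLt)

end Stmt11Aux
namespace Stmt11Aux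

open MixedGraph

variable {α : Type*}

/-- Original node embedded in the DAG node type. -/
abbrev nL (a : α) : (α ⊕ α) ⊕ Sym2 α := Sum.inl (Sum.inl a)
/-- Error node embedded in the DAG node type. -/
abbrev nE (a : α) : (α ⊕ α) ⊕ Sym2 α := Sum.inl (Sum.inr a)

variable (G : MixedGraph α)

lemma dag_undir {u v : (α ⊕ α) ⊕ Sym2 α} : ¬ (dagOf G).undir u v := fun h => h

lemma dag_out_L {a : α} {v : (α ⊕ α) ⊕ Sym2 α} :
    (dagOf G).dir (nL a) v ↔ ∃ b, v = nL b ∧ G.dir a b := by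
  rcases v with (b | b) | s <;>
    simp [dagOf, dagDir, eamp, eampDir]

lemma dag_into_L {u : (α ⊕ α) ⊕ Sym2 α} {b : α} :
    (dagOf G).dir u (nL b) ↔ (∃ a, u = nL a ∧ G.dir a b) ∨ u = nE b := by
  rcases u with (a | a) | s <;>
    simp [dagOf, dagDir, eamp, eampDir, eq_comm]

lemma dag_into_E {u : (α ⊕ α) ⊕ Sym2 α} {b : α} : ¬ (dagOf G).dir u (nE b) := by
  rcases u with (a | a) | s <;>
    simp [dagOf, dagDir, eamp, eampDir]

lemma dag_out_E {a : α} {v : (α ⊕ α) ⊕ Sym2 α} :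
    (dagOf G).dir (nE a) v ↔ v = nL a ∨ ∃ w, G.undir a w ∧ v = Sum.inr s(a, w) := by
  rcases v with (b | b) | s <;>
    simp [dagOf, dagDir, eamp, eampDir, eq_comm]

lemma dag_into_P {u : (α ⊕ α) ⊕ Sym2 α} {s : Sym2 α} :
    (dagOf G).dir u (Sum.inr s) ↔ ∃ a w, u = nE a ∧ G.undir a w ∧ s = s(a, w) := by
  rcases u with (a | a) | s' <;>
    simp [dagOf, dagDir, eamp, eampDir]

lemma dag_out_P {s : Sym2 α} {v : (α ⊕ α) ⊕ Sym2 α} : ¬ (dagOf G).dir (Sum.inr s) v := by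
  rcases v with (b | b) | s' <;>
    simp [dagOf, dagDir, eamp, eampDir]

lemma dag_reach_L {a : α} {w : (α ⊕ α) ⊕ Sym2 α}
    (h : Relation.TransGen (dagOf G).dir (nL a) w) :
    ∃ b, w = nL b ∧ Relation.TransGen G.dir a b := by
  induction h with
  | single h =>
    obtain ⟨b, rfl, hb⟩ := (dag_out_L G).mp h
    exact ⟨b, rfl, .single hb⟩
  | tail h1 h2 ih =>
    obtain ⟨b, rfl, hb⟩ := ih
    obtain ⟨c, rfl, hc⟩ := (dag_out_L G).mp h2
    exact ⟨c, rfl, hb.tail hc⟩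

lemma dag_acyclic (hG : G.IsChainGraph) :
    ∀ v, ¬ Relation.TransGen (dagOf G).dir v v := by
  intro v hv
  rcases v with (a | a) | s
  · obtain ⟨b, hb, ht⟩ := dag_reach_L G hv
    have hab : a = b := by
      simpa [nL] using hb
    subst hab
    exact transGen_irrefl_of_chainGraph G hG a ht
  · obtain ⟨c, _, hc2⟩ := Relation.TransGen.tail'_iff.mp hv
    exact dag_into_E G hc2
  · obtain ⟨c, hc1, _⟩ := Relation.TransGen.head'_iff.mp hv
    exact dag_out_P G hc1

lemma dag_isDAG (hG : G.IsChainGraph) : (dagOf G).IsDAG := by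
  have hacy := dag_acyclic G hG
  refine ⟨⟨⟨?_, ?_, ?_, ?_⟩, ?_⟩, fun a b h => h⟩
  · exact fun a h => hacy a (.single h)
  · exact fun a h => h
  · exact fun a b h h' => hacy a ((Relation.TransGen.single h).tail h')
  · exact fun a b _ h => h
  · rintro ⟨n, f, h0, _, hstep⟩
    have hdir : ∀ i : Fin (n + 1), (dagOf G).dir (f i.castSucc) (f i.succ) := by
      intro i
      rcases hstep i with h | h
      · exact h
      · exact h.elim
    have key : ∀ k : ℕ, ∀ hk : k + 1 < n + 2,
        Relation.TransGen (dagOf G).dir (f 0) (f ⟨k + 1, hk⟩) := by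
      intro k
      induction k with
      | zero =>
        intro hk
        have h2 := hdir ⟨0, by omega⟩
        have e1 : (Fin.castSucc ⟨0, by omega⟩ : Fin (n + 2)) = (0 : Fin (n + 2)) := by
          ext; simp
        have e2 : (Fin.succ ⟨0, by omega⟩ : Fin (n + 2)) = ⟨0 + 1, hk⟩ := by
          ext; simp
        rw [e1, e2] at h2
        exact .single h2
      | succ k' ih =>
        intro hk
        have h2 := hdir ⟨k' + 1, by omega⟩
        have e1 : (Fin.castSucc ⟨k' + 1, by omega⟩ : Fin (n + 2)) = ⟨k' + 1, by omega⟩ := by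
          ext; simp
        have e2 : (Fin.succ ⟨k' + 1, by omega⟩ : Fin (n + 2)) = ⟨k' + 1 + 1, hk⟩ := by
          ext; simp
        rw [e1, e2] at h2
        exact (ih (by omega)).tail h2
    have hlast := key n (by omega)
    have e3 : (⟨n + 1, by omega⟩ : Fin (n + 2)) = Fin.last (n + 1) := by
      ext; simp
    rw [e3, ← h0] at hlast
    exact hacy _ hlast

/-- The determined set of the DAG construction. -/
def Dbig (Z : Set α) : Set ((α ⊕ α) ⊕ Sym2 α) :=
  MixedGraph.DSet (dagDet G) ((Sum.inl ∘ Sum.inl) '' Z ∪ selNodes G)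

lemma mem_Dbig (Z : Set α) (v : (α ⊕ α) ⊕ Sym2 α) : v ∈ Dbig G Z ↔
    (∃ a ∈ Z, v = nL a) ∨ v ∈ selNodes G ∨
      (∃ a, v = nE a ∧ a ∈ Z ∧ ∀ p, G.dir p a → p ∈ Z) := by
  constructor
  · intro h
    induction h with
    | base a ha =>
      rcases ha with ⟨z, hz, rfl⟩ | hsel
      · exact Or.inl ⟨z, hz, rfl⟩
      · exact Or.inr (Or.inl hsel)
    | step S a hmem hforall ih =>
      obtain ⟨q, hq, heq⟩ := hmem
      have hS : S = Sum.inl '' q.1 := congrArg Prod.fst heq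
      have ha : a = Sum.inl q.2 := congrArg Prod.snd heq
      rcases hq with ⟨A, hA⟩ | ⟨A, hA⟩
      · -- q = (eampPa G A ∪ {Sum.inr A}, Sum.inl A)
        have hq1 : q.1 = eampPa G A ∪ {Sum.inr A} := by rw [hA]
        have hq2 : q.2 = Sum.inl A := by rw [hA]
        have hEA : nE A ∈ S := by
          rw [hS, hq1]
          exact ⟨Sum.inr A, Or.inr rfl, rfl⟩
        rcases ih (nE A) hEA with ⟨z, hz, hzz⟩ | hsel | ⟨a', heq', hA', _⟩
        · simp [nE, nL] at hzz
        · obtain ⟨x, y, _, hv⟩ := hsel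
          simp [nE] at hv
        · have : A = a' := by simpa [nE] using heq'
          subst this
          exact Or.inl ⟨A, hA', by rw [ha, hq2]⟩
      · -- q = (eampPa G A ∪ {Sum.inl A}, Sum.inr A)
        have hq1 : q.1 = eampPa G A ∪ {Sum.inl A} := by rw [hA]
        have hq2 : q.2 = Sum.inr A := by rw [hA]
        have hLA : nL A ∈ S := by
          rw [hS, hq1]
          exact ⟨Sum.inl A, Or.inr rfl, rfl⟩
        have hAZ : A ∈ Z := by
          rcases ih (nL A) hLA with ⟨z, hz, hzz⟩ | hsel | ⟨a', heq', _, _⟩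
          · have : A = z := by simpa [nL] using hzz
            exact this ▸ hz
          · obtain ⟨x, y, _, hv⟩ := hsel
            simp [nL] at hv
          · simp [nE, nL] at heq'
        refine Or.inr (Or.inr ⟨A, by rw [ha, hq2], hAZ, ?_⟩)
        intro p hp
        have hLp : nL p ∈ S := by
          rw [hS, hq1]
          exact ⟨Sum.inl p, Or.inl ⟨p, hp, rfl⟩, rfl⟩
        rcases ih (nL p) hLp with ⟨z, hz, hzz⟩ | hsel | ⟨a', heq', _, _⟩
        · have : p = z := by simpa [nL] using hzz
          exact this ▸ hz
        · obtain ⟨x, y, _, hv⟩ := hsel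
          simp [nL] at hv
        · simp [nE, nL] at heq'
  · rintro (⟨a, ha, rfl⟩ | hsel | ⟨a, rfl, haZ, hpar⟩)
    · exact .base _ (Or.inl ⟨a, ha, rfl⟩)
    · exact .base _ (Or.inr hsel)
    · refine MixedGraph.Determined.step (Sum.inl '' (eampPa G a ∪ {Sum.inl a})) (nE a)
        ⟨(eampPa G a ∪ {Sum.inl a}, Sum.inr a), Or.inr ⟨a, rfl⟩, rfl⟩ ?_
      rintro b ⟨x, hx, rfl⟩
      rcases hx with ⟨p, hp, rfl⟩ | hx
      · exact .base _ (Or.inl ⟨p, hpar p hp, rfl⟩)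
      · rw [Set.mem_singleton_iff] at hx
        subst hx
        exact .base _ (Or.inl ⟨a, haZ, rfl⟩)

lemma mem_Dbig_L {Z : Set α} {a : α} : nL a ∈ Dbig G Z ↔ a ∈ Z := by
  rw [mem_Dbig]
  constructor
  · rintro (⟨z, hz, hzz⟩ | hsel | ⟨a', heq', _, _⟩)
    · have : a = z := by simpa [nL] using hzz
      exact this ▸ hz
    · obtain ⟨x, y, _, hv⟩ := hsel
      simp [nL] at hv
    · simp [nE, nL] at heq'
  · intro h
    exact Or.inl ⟨a, h, rfl⟩

lemma mem_Dbig_E {Z : Set α} {a : α} :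
    nE a ∈ Dbig G Z ↔ (a ∈ Z ∧ ∀ p, G.dir p a → p ∈ Z) := by
  rw [mem_Dbig]
  constructor
  · rintro (⟨z, _, hzz⟩ | hsel | ⟨a', heq', h1, h2⟩)
    · simp [nE, nL] at hzz
    · obtain ⟨x, y, _, hv⟩ := hsel
      simp [nE] at hv
    · have : a = a' := by simpa [nE] using heq'
      subst this
      exact ⟨h1, h2⟩
  · intro h
    exact Or.inr (Or.inr ⟨a, rfl, h.1, h.2⟩)

lemma mem_Dbig_P {Z : Set α} {x y : α} (h : G.undir x y) :
    Sum.inr s(x, y) ∈ Dbig G Z :=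
  (mem_Dbig G Z _).mpr (Or.inr (Or.inl ⟨x, y, h, rfl⟩))

lemma L_mem_DsanD {Z : Set α} {a : α} :
    nL a ∈ Dbig G Z ∪ (dagOf G).san (Dbig G Z) ↔ a ∈ Z ∪ G.san Z := by
  constructor
  · rintro (h | ⟨hnot, w, hw, ht⟩)
    · exact Or.inl ((mem_Dbig_L G).mp h)
    · obtain ⟨b, rfl, htb⟩ := dag_reach_L G ht
      have hbZ : b ∈ Z := by
        rcases (mem_Dbig G Z _).mp hw with ⟨z, hz, hzz⟩ | hsel | ⟨a', heq', _, _⟩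
        · have : b = z := by simpa [nL] using hzz
          exact this ▸ hz
        · obtain ⟨x, y, _, hv⟩ := hsel
          simp [nL] at hv
        · simp [nE, nL] at heq'
      by_cases haZ : a ∈ Z
      · exact Or.inl haZ
      · exact Or.inr ⟨haZ, b, hbZ, htb⟩
  · rintro (h | ⟨hnot, b, hbZ, htb⟩)
    · exact Or.inl ((mem_Dbig_L G).mpr h)
    · have ht : Relation.TransGen (dagOf G).dir (nL a) (nL b) := by
        refine Relation.TransGen.lift nL ?_ _ _ htb
        intro x y hxy
        exact (dag_out_L G).mpr ⟨y, rfl, hxy⟩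
      exact mem_union_san_trans (dagOf G) (Dbig G Z) ht (Or.inl ((mem_Dbig_L G).mpr hbZ))

end Stmt11Aux
namespace Stmt11Aux

open MixedGraph

variable {β : Type*}

section Retype

variable (H : MixedGraph β) (D : Set β) {y B : β}

lemma pa_singleton_dir {p : β} (h : p ∈ H.pa {B}) : H.dir p B := by
  obtain ⟨_, x, hx, hd⟩ := h
  rw [Set.mem_singleton_iff] at hx
  subst hx
  exact hd

lemma pa_singleton_mem {p : β} (hs : H.Simple) (h : H.dir p B) : p ∈ H.pa {B} := by
  refine ⟨?_, B, rfl, h⟩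
  intro hc
  rw [Set.mem_singleton_iff] at hc
  subst hc
  exact hs.1 _ h

lemma retype1 (h : Reach H D y .line B) (hm : B ∈ D ∪ H.san D) : Reach H D y .head B := by
  cases h with
  | base => exact .base _
  | out C hdir hBD hok hr => exact .out _ hdir hBD (okT_mk_not H D isTpx_ho hBD) hr
  | into C hdir hCD hok hr => exact .into _ hdir hCD (okT_mk_tpx H D isTpx_he (hok.1 isTpx_le)) hr
  | line C hdir hok hr => exact .line _ hdir (okT_mk_tpx H D isTpx_hl hm) hr

lemma retype2 (h : Reach H D y .line B) (hBD : B ∉ D) : Reach H D y .tail B := by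
  cases h with
  | base => exact .base _
  | out C hdir hBD' hok hr => exact .out _ hdir hBD' (okT_mk_not H D (isTpx_tail _) hBD) hr
  | into C hdir hCD hok hr => exact .into _ hdir hCD (okT_mk_not H D (isTpx_tail _) hBD) hr
  | line C hdir hok hr => exact .line _ hdir (okT_mk_not H D (isTpx_tail _) hBD) hr

lemma retype3 (h : Reach H D y .head B) (hesc : B ∈ D → ∃ p ∈ H.pa {B}, p ∉ D) :
    Reach H D y .line B := by
  cases h with
  | base => exact .base _
  | out C hdir hBD hok hr => exact .out _ hdir hBD (okT_mk_not H D isTpx_lo hBD) hr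
  | into C hdir hCD hok hr => exact .into _ hdir hCD (okT_mk_tpx H D isTpx_le (hok.1 isTpx_he)) hr
  | line C hdir hok hr => exact .line _ hdir (okT_mk_line H D hesc) hr

lemma retype4 (h : Reach H D y .line B) : Reach H D y .start B := by
  cases h with
  | base => exact .base _
  | out C hdir hBD hok hr => exact .out _ hdir hBD (okT_mk_start H D) hr
  | into C hdir hCD hok hr => exact .into _ hdir hCD (okT_mk_start H D) hr
  | line C hdir hok hr => exact .line _ hdir (okT_mk_start H D) hr

lemma line_not_det (hy : y ∉ D) (h : Reach H D y .line B) :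
    B ∉ D ∨ ∃ p, H.dir p B ∧ p ∉ D := by
  cases h with
  | base => exact Or.inl hy
  | out C hdir hBD hok hr => exact Or.inl hBD
  | into C hdir hCD hok hr => exact Or.inr ⟨_, hdir, hCD⟩
  | line C hdir hok hr =>
    by_cases hBD : B ∈ D
    · obtain ⟨_, _, p, hp, hpD⟩ := hok.2 isTpx_ll (fun h => nomatch h) hBD
      exact Or.inr ⟨p, pa_singleton_dir H hp, hpD⟩
    · exact Or.inl hBD

end Retype

section FWBW

variable {α : Type*} (G : MixedGraph α)

lemma nE_not_Dbig {Z : Set α} {B : α} (h : B ∉ Z ∨ ∃ p, G.dir p B ∧ p ∉ Z) :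
    nE B ∉ Dbig G Z := by
  intro hmem
  rw [mem_Dbig_E] at hmem
  rcases h with h | ⟨p, hp, hpZ⟩
  · exact h hmem.1
  · exact hpZ (hmem.2 p hp)

lemma nE_esc {Z : Set α} {B : α} (hG : G.IsChainGraph) (h : nE B ∉ Dbig G Z) :
    B ∈ Z → ∃ p ∈ G.pa {B}, p ∉ Z := by
  intro hBZ
  rw [mem_Dbig_E] at h
  push_neg at h
  obtain ⟨p, hp, hpZ⟩ := h hBZ
  exact ⟨p, pa_singleton_mem G hG.1 hp, hpZ⟩

lemma nL_not_Dbig {Z : Set α} {B : α} (h : B ∉ Z) : nL B ∉ Dbig G Z :=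
  fun hm => h ((mem_Dbig_L G).mp hm)

def mapT : Arr → Arr
  | .line => .tail
  | t => t

def mapN (t : Arr) (B : α) : (α ⊕ α) ⊕ Sym2 α :=
  match t with
  | .line => nE B
  | _ => nL B

lemma fw (hG : G.IsChainGraph) {Z : Set α} {y : α} (hyZ : y ∉ Z) :
    ∀ {t : Arr} {B : α}, Reach G Z y t B →
      (t = .head → ∃ p, G.dir p B ∧ p ∉ Z) →
      (t = .start → B ∉ Z) →
      Reach (dagOf G) (Dbig G Z) (nL y) (mapT t) (mapN t B) := by
  intro t B h
  induction h with
  | base t =>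
    intro _ _
    cases t with
    | line =>
      have hEy : nE y ∉ Dbig G Z := nE_not_Dbig G (Or.inl hyZ)
      exact .out _ ((dag_out_E G).mpr (Or.inl rfl)) hEy
        (okT_mk_not _ _ (isTpx_tail _) hEy) (.base _)
    | start => exact .base _
    | head => exact .base _
    | tail => exact .base _
  | @out B C t hdir hBZ hok hr ih =>
    intro h1 h2
    have ihh : Reach (dagOf G) (Dbig G Z) (nL y) .head (nL C) :=
      ih (fun _ => ⟨B, hdir, hBZ⟩) (fun h => nomatch h)
    have hLB : nL B ∉ Dbig G Z := nL_not_Dbig G hBZ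
    have hstep : Reach (dagOf G) (Dbig G Z) (nL y) .head (nL B) :=
      .out _ ((dag_out_L G).mpr ⟨C, rfl, hdir⟩) hLB (okT_mk_not _ _ isTpx_ho hLB) ihh
    cases t with
    | line =>
      have hEB : nE B ∉ Dbig G Z := nE_not_Dbig G (Or.inl hBZ)
      exact .out _ ((dag_out_E G).mpr (Or.inl rfl)) hEB
        (okT_mk_not _ _ (isTpx_tail _) hEB) hstep
    | head =>
      exact .out _ ((dag_out_L G).mpr ⟨C, rfl, hdir⟩) hLB (okT_mk_not _ _ isTpx_ho hLB) ihh
    | tail =>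
      exact .out _ ((dag_out_L G).mpr ⟨C, rfl, hdir⟩) hLB
        (okT_mk_not _ _ (isTpx_tail _) hLB) ihh
    | start =>
      exact .out _ ((dag_out_L G).mpr ⟨C, rfl, hdir⟩) hLB (okT_mk_start _ _) ihh
  | @into B C t hdir hCZ hok hr ih =>
    intro h1 h2
    have iht : Reach (dagOf G) (Dbig G Z) (nL y) .tail (nL C) :=
      ih (fun h => nomatch h) (fun h => nomatch h)
    have hLC : nL C ∉ Dbig G Z := nL_not_Dbig G hCZ
    cases t with
    | head =>
      have hmem : nL B ∈ Dbig G Z ∪ (dagOf G).san (Dbig G Z) :=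
        (L_mem_DsanD G).mpr (hok.1 isTpx_he)
      exact .into _ ((dag_into_L G).mpr (Or.inl ⟨C, rfl, hdir⟩)) hLC
        (okT_mk_tpx _ _ isTpx_he hmem) iht
    | tail =>
      have hBZ : B ∉ Z := by
        intro hB
        obtain ⟨ht, _, _⟩ := hok.2 (isTpx_tail _) (fun h => nomatch h) hB
        exact nomatch ht
      exact .into _ ((dag_into_L G).mpr (Or.inl ⟨C, rfl, hdir⟩)) hLC
        (okT_mk_not _ _ (isTpx_tail _) (nL_not_Dbig G hBZ)) iht
    | start =>
      exact .into _ ((dag_into_L G).mpr (Or.inl ⟨C, rfl, hdir⟩)) hLC (okT_mk_start _ _) iht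
    | line =>
      have hmem : nL B ∈ Dbig G Z ∪ (dagOf G).san (Dbig G Z) :=
        (L_mem_DsanD G).mpr (hok.1 isTpx_le)
      have hEB : nE B ∉ Dbig G Z := nE_not_Dbig G (Or.inr ⟨C, hdir, hCZ⟩)
      refine .out _ ((dag_out_E G).mpr (Or.inl rfl)) hEB
        (okT_mk_not _ _ (isTpx_tail _) hEB) ?_
      exact .into _ ((dag_into_L G).mpr (Or.inl ⟨C, rfl, hdir⟩)) hLC
        (okT_mk_tpx _ _ isTpx_he hmem) iht
  | @line B C t hundir hok hr ih =>
    intro h1 h2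
    have ihl : Reach (dagOf G) (Dbig G Z) (nL y) .tail (nE C) :=
      ih (fun h => nomatch h) (fun h => nomatch h)
    have hEC : nE C ∉ Dbig G Z := nE_not_Dbig G (line_not_det G Z hyZ hr)
    have hP : Sum.inr s(B, C) ∈ Dbig G Z := mem_Dbig_P G hundir
    have hPstep : Reach (dagOf G) (Dbig G Z) (nL y) .head (Sum.inr s(B, C)) := by
      refine .into _ ?_ hEC (okT_mk_tpx _ _ isTpx_he (Or.inl hP)) ihl
      exact (dag_into_P G).mpr ⟨C, B, rfl, G.undir_symm _ _ hundir, Sym2.eq_swap⟩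
    have hPexit : ∀ hEB : nE B ∉ Dbig G Z,
        Reach (dagOf G) (Dbig G Z) (nL y) .tail (nE B) := by
      intro hEB
      exact .out _ ((dag_out_E G).mpr (Or.inr ⟨C, hundir, rfl⟩)) hEB
        (okT_mk_not _ _ (isTpx_tail _) hEB) hPstep
    cases t with
    | line =>
      have hEB : nE B ∉ Dbig G Z := by
        apply nE_not_Dbig
        by_cases hBZ : B ∈ Z
        · obtain ⟨_, _, p, hp, hpZ⟩ := hok.2 isTpx_ll (fun h => nomatch h) hBZ
          exact Or.inr ⟨p, pa_singleton_dir G hp, hpZ⟩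
        · exact Or.inl hBZ
      exact hPexit hEB
    | head =>
      obtain ⟨p, hp, hpZ⟩ := h1 rfl
      have hEB : nE B ∉ Dbig G Z := nE_not_Dbig G (Or.inr ⟨p, hp, hpZ⟩)
      have hmem : nL B ∈ Dbig G Z ∪ (dagOf G).san (Dbig G Z) :=
        (L_mem_DsanD G).mpr (hok.1 isTpx_hl)
      exact .into _ ((dag_into_L G).mpr (Or.inr rfl)) hEB
        (okT_mk_tpx _ _ isTpx_he hmem) (hPexit hEB)
    | tail =>
      have hBZ : B ∉ Z := by
        intro hB
        obtain ⟨ht, _, _⟩ := hok.2 (isTpx_tail _) (fun h => nomatch h) hB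
        exact nomatch ht
      have hEB : nE B ∉ Dbig G Z := nE_not_Dbig G (Or.inl hBZ)
      exact .into _ ((dag_into_L G).mpr (Or.inr rfl)) hEB
        (okT_mk_not _ _ (isTpx_tail _) (nL_not_Dbig G hBZ)) (hPexit hEB)
    | start =>
      have hBZ : B ∉ Z := h2 rfl
      have hEB : nE B ∉ Dbig G Z := nE_not_Dbig G (Or.inl hBZ)
      exact .into _ ((dag_into_L G).mpr (Or.inr rfl)) hEB (okT_mk_start _ _) (hPexit hEB)

def bwP (G : MixedGraph α) (Z : Set α) (y : α) : Arr → ((α ⊕ α) ⊕ Sym2 α) → Prop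
  | t, Sum.inl (Sum.inl B) =>
      (t = .head → Reach G Z y .head B) ∧ (t = .tail → Reach G Z y .tail B) ∧
      (t = .start → B ∉ Z → Reach G Z y .start B)
  | t, Sum.inl (Sum.inr B) => t = .tail → Reach G Z y .line B
  | t, Sum.inr s => t = .head → ∃ u w, s = s(u, w) ∧ G.undir u w ∧ Reach G Z y .line u

lemma bw (hG : G.IsChainGraph) {Z : Set α} {y : α} (hyZ : y ∉ Z) :
    ∀ {t : Arr} {v : (α ⊕ α) ⊕ Sym2 α},
      Reach (dagOf G) (Dbig G Z) (nL y) t v → bwP G Z y t v := by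
  intro t v h
  induction h with
  | base t =>
    exact ⟨fun _ => .base _, fun _ => .base _, fun _ _ => .base _⟩
  | @out v C t hdir hvD hok hr ih =>
    rcases v with (B | B) | s
    · obtain ⟨b, rfl, hdirG⟩ := (dag_out_L G).mp hdir
      have hRb : Reach G Z y .head b := ih.1 rfl
      have hBZ : B ∉ Z := fun h => hvD ((mem_Dbig_L G).mpr h)
      exact ⟨fun _ => .out _ hdirG hBZ (okT_mk_not _ _ isTpx_ho hBZ) hRb,
        fun _ => .out _ hdirG hBZ (okT_mk_not _ _ (isTpx_tail _) hBZ) hRb,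
        fun _ _ => .out _ hdirG hBZ (okT_mk_start _ _) hRb⟩
    · intro _
      have hesc : B ∈ Z → ∃ p ∈ G.pa {B}, p ∉ Z := nE_esc G hG hvD
      rcases (dag_out_E G).mp hdir with rfl | ⟨w, hund, rfl⟩
      · exact retype3 G Z (ih.1 rfl) hesc
      · obtain ⟨u, w', hs, hund', hRu⟩ := ih rfl
        rcases Sym2.eq_iff.mp hs with ⟨h1, h2⟩ | ⟨h1, h2⟩
        · exact h1 ▸ hRu
        · subst h2
          exact .line _ hund (okT_mk_line _ _ hesc) hRu
    · exact absurd hdir (dag_out_P G)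
  | @into B C t hdir hCD hok hr ih =>
    rcases B with (B | B) | s
    · rcases (dag_into_L G).mp hdir with ⟨c, rfl, hdirG⟩ | rfl
      · have hRc : Reach G Z y .tail c := ih.2.1 rfl
        have hcZ : c ∉ Z := fun h => hCD ((mem_Dbig_L G).mpr h)
        refine ⟨?_, ?_, ?_⟩
        · intro ht
          subst ht
          have hmem : B ∈ Z ∪ G.san Z := (L_mem_DsanD G).mp (hok.1 isTpx_he)
          exact .into _ hdirG hcZ (okT_mk_tpx _ _ isTpx_he hmem) hRc
        · intro ht
          subst ht
          have hBZ : B ∉ Z := by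
            intro hB
            obtain ⟨hteq, _, _⟩ :=
              hok.2 (isTpx_tail _) (fun h => nomatch h) ((mem_Dbig_L G).mpr hB)
            exact nomatch hteq
          exact .into _ hdirG hcZ (okT_mk_not _ _ (isTpx_tail _) hBZ) hRc
        · intro ht _
          exact .into _ hdirG hcZ (okT_mk_start _ _) hRc
      · have hRl : Reach G Z y .line B := ih rfl
        have hesc : B ∈ Z → ∃ p ∈ G.pa {B}, p ∉ Z := nE_esc G hG hCD
        refine ⟨?_, ?_, ?_⟩
        · intro ht
          subst ht
          have hmem : B ∈ Z ∪ G.san Z := (L_mem_DsanD G).mp (hok.1 isTpx_he)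
          exact retype1 G Z hRl (by
            rcases hmem with h | h
            · exact Or.inl h
            · exact Or.inr h)
        · intro ht
          subst ht
          have hBZ : B ∉ Z := by
            intro hB
            obtain ⟨hteq, _, _⟩ :=
              hok.2 (isTpx_tail _) (fun h => nomatch h) ((mem_Dbig_L G).mpr hB)
            exact nomatch hteq
          exact retype2 G Z hRl hBZ
        · intro ht _
          exact retype4 G Z hRl
    · exact absurd hdir (dag_into_E G)
    · intro _
      obtain ⟨a, w, rfl, hund, hs⟩ := (dag_into_P G).mp hdir
      exact ⟨a, w, hs, hund, ih rfl⟩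
  | line t hund hok hr ih => exact absurd hund (dag_undir G)

end FWBW

end Stmt11Aux

/-- Corollary 2: for every AMP CG G there exist a DAG G'' with
deterministic nodes and a set S of selection nodes such that for all disjoint
`X, Y, Z ⊆ V`, X is AMP-separated from Y given Z in G iff X is separated from Y
given `Z ∪ S` in G'' (separation with deterministic nodes); i.e.,
`I_AMP(G) = [I(G'')]_ε^S`. -/
theorem stmt11 {α : Type*} (G : MixedGraph α) (hG : G.IsChainGraph) :
    ∃ (G'' : MixedGraph ((α ⊕ α) ⊕ Sym2 α))
      (det : Set (Set ((α ⊕ α) ⊕ Sym2 α) × ((α ⊕ α) ⊕ Sym2 α)))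
      (S : Set ((α ⊕ α) ⊕ Sym2 α)),
      G''.IsDAG ∧
      ∀ X Y Z : Set α, Disjoint X Y → Disjoint X Z → Disjoint Y Z →
        (G.AMPSep Z X Y ↔
          G''.AMPSep (MixedGraph.DSet det ((Sum.inl ∘ Sum.inl) '' Z ∪ S))
            ((Sum.inl ∘ Sum.inl) '' X) ((Sum.inl ∘ Sum.inl) '' Y)) := by
  classical
  open Stmt11Aux in
  refine ⟨dagOf G, dagDet G, selNodes G, dag_isDAG G hG, ?_⟩
  intro X Y Z _ hXZ hYZ
  have hs : G.Simple := hG.1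
  have hacy := Stmt11Aux.transGen_irrefl_of_chainGraph G hG
  have hDAG := Stmt11Aux.dag_isDAG G hG
  have hs'' : (dagOf G).Simple := hDAG.1.1
  have hacy'' := Stmt11Aux.dag_acyclic G hG
  have hXZ' : ∀ x ∈ X, x ∉ Z := fun x hx hz => Set.disjoint_left.mp hXZ hx hz
  have hYZ' : ∀ y ∈ Y, y ∉ Z := fun y hy hz => Set.disjoint_left.mp hYZ hy hz
  have hX'' : ∀ v ∈ (Sum.inl ∘ Sum.inl) '' X, v ∉ Stmt11Aux.Dbig G Z := by
    rintro v ⟨x, hx, rfl⟩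
    exact Stmt11Aux.nL_not_Dbig G (hXZ' x hx)
  have hY'' : ∀ v ∈ (Sum.inl ∘ Sum.inl) '' Y, v ∉ Stmt11Aux.Dbig G Z := by
    rintro v ⟨y, hy, rfl⟩
    exact Stmt11Aux.nL_not_Dbig G (hYZ' y hy)
  have lhs_iff := Stmt11Aux.ampSep_iff_not_reach G Z hs hacy hXZ' hYZ'
  have rhs_iff := Stmt11Aux.ampSep_iff_not_reach (dagOf G) (Stmt11Aux.Dbig G Z) hs'' hacy''
    hX'' hY''
  rw [lhs_iff]
  rw [show MixedGraph.DSet (dagDet G) ((Sum.inl ∘ Sum.inl) '' Z ∪ selNodes G) =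
    Stmt11Aux.Dbig G Z from rfl, rhs_iff]
  constructor
  · rintro h v ⟨x, hx, rfl⟩ w ⟨y, hy, rfl⟩ hr
    have hb := Stmt11Aux.bw G hG (hYZ' y hy) hr
    exact h x hx y hy (hb.2.2 rfl (hXZ' x hx))
  · intro h x hx y hy hr
    have hf := Stmt11Aux.fw G hG (hYZ' y hy) hr (fun ht => nomatch ht) (fun _ => hXZ' x hx)
    exact h _ ⟨x, hx, rfl⟩ _ ⟨y, hy, rfl⟩ hf
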